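/- Let c_n be the number of canonical trees in G₄ with n internal nodes (with c₀ = 1, counting the trivial tree consisting of a single leaf). Then for all n ≥ 1, c_n = 2·c_{n−1} + 2·∑_{i=0}^{n−1} c_i · c_{n−1−i}; equivalently the ordinary generating series F = ∑_{n≥0} c_n x^n ∈ ℚ[[x]] satisfies 2x·F² + (2x−1)·F + 1 = 0. In particular c₁ = 4, c₂ = 24, c₃ = 176. -/

import Mathlib

open scoped Classical

/-- The four binary generators `≺, ≻, ∘, ⊙`. -/
inductive Lbl : Type
  | prec | succ | mid | dot

/-- Planar binary trees with internal nodes labelled by `{≺, ≻, ∘, ⊙}`: the underlying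
objects of the free non-symmetric operad `G₄` on four binary generators (a tree with `n`
leaves is an element of `G₄(n)`). -/
inductive T4 : Type
  | leaf : T4
  | node : Lbl → T4 → T4 → T4

/-- The generator `a` as a two-leaf tree. -/
def gen2 (a : Lbl) : T4 := T4.node a T4.leaf T4.leaf
/-- `a ∘₁ b` for generators `a, b`. -/
def cmp1 (a b : Lbl) : T4 := T4.node a (gen2 b) T4.leaf
/-- `a ∘₂ b` for generators `a, b`. -/
def cmp2 (a b : Lbl) : T4 := T4.node a T4.leaf (gen2 b)

/-- The eight defining relations. -/
inductive Rel8 : T4 → T4 → Prop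
  | r1 : Rel8 (cmp1 .prec .succ) (cmp2 .succ .prec)
  | r2 : Rel8 (cmp1 .mid .mid) (cmp2 .mid .mid)
  | r3 : Rel8 (cmp1 .mid .succ) (cmp2 .succ .mid)
  | r4 : Rel8 (cmp1 .mid .prec) (cmp2 .mid .succ)
  | r5 : Rel8 (cmp1 .prec .mid) (cmp2 .mid .prec)
  | r6 : Rel8 (cmp1 .dot .dot) (cmp2 .dot .dot)
  | r7 : Rel8 (cmp1 .prec .prec) (cmp2 .prec .dot)
  | r8 : Rel8 (cmp1 .succ .dot) (cmp2 .succ .succ)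

/-- The smallest equivalence relation containing the eight relations and compatible with
grafting at any position (equivalently, the congruence generated under node contexts). -/
inductive TEquiv : T4 → T4 → Prop
  | base {s t : T4} : Rel8 s t → TEquiv s t
  | refl (t : T4) : TEquiv t t
  | symm {s t : T4} : TEquiv s t → TEquiv t s
  | trans {s t u : T4} : TEquiv s t → TEquiv t u → TEquiv s u
  | congrL {l : Lbl} {a a' b : T4} : TEquiv a a' → TEquiv (T4.node l a b) (T4.node l a' b)
  | congrR {l : Lbl} {a b b' : T4} : TEquiv b b' → TEquiv (T4.node l a b) (T4.node l a b')

/-- The eight (root label, right-child label) pairs appearing on the right-hand sides of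
the relations. -/
def RHSPair : Lbl → Lbl → Prop := fun a b =>
  (a = .succ ∧ b = .prec) ∨ (a = .mid ∧ b = .mid) ∨ (a = .succ ∧ b = .mid) ∨
  (a = .mid ∧ b = .succ) ∨ (a = .mid ∧ b = .prec) ∨ (a = .dot ∧ b = .dot) ∨
  (a = .prec ∧ b = .dot) ∨ (a = .succ ∧ b = .succ)

/-- A tree is canonical if no internal node together with its right child realizes one of
the eight right-hand side patterns. -/
def Canonical : T4 → Prop
  | .leaf => True
  | .node a l r =>
      Canonical l ∧ Canonical r ∧
      match r with
      | .leaf => True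
      | .node b _ _ => ¬ RHSPair a b

/-- Number of internal nodes of a tree. -/
def numNodes : T4 → ℕ
  | .leaf => 0
  | .node _ a b => numNodes a + numNodes b + 1

/-- `canonCount n` is the number of canonical trees with `n` internal nodes. -/
noncomputable def canonCount (n : ℕ) : ℕ :=
  Set.ncard {t : T4 | Canonical t ∧ numNodes t = n}

deriving instance DecidableEq for Lbl
instance : Fintype Lbl := ⟨{.prec, .succ, .mid, .dot}, fun x => by cases x <;> decide⟩
deriving instance DecidableEq for T4

/-- Boolean: label `b` allowed as root of right child of an `a`-node. -/
def rOK : Lbl → Lbl → Bool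
  | .prec, b => b ≠ .dot
  | .succ, b => b = .dot
  | .mid,  b => b = .dot
  | .dot,  b => b ≠ .dot

def okRight : Lbl → T4 → Bool
  | _, .leaf => true
  | a, .node b _ _ => rOK a b

lemma rOK_iff (a b : Lbl) : rOK a b = true ↔ ¬ RHSPair a b := by
  cases a <;> cases b <;> simp [rOK, RHSPair]

def canonF : ℕ → Finset T4
  | 0 => {T4.leaf}
  | n + 1 =>
      Finset.univ.biUnion fun a : Lbl =>
        (Finset.range (n + 1)).attach.biUnion fun i =>
          ((canonF i.1) ×ˢ ((canonF (n - i.1)).filter fun r => okRight a r)).image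
            fun p => T4.node a p.1 p.2
  termination_by n => n
  decreasing_by
  all_goals (have := i.2; simp only [Finset.mem_range] at this; omega)

lemma mem_canonF : ∀ (t : T4) (n : ℕ), t ∈ canonF n ↔ Canonical t ∧ numNodes t = n := by
  intro t
  induction t with
  | leaf =>
      intro n
      cases n with
      | zero => simp [canonF, Canonical, numNodes]
      | succ m => simp [canonF, Canonical, numNodes]
  | node a l r ihl ihr =>
      intro n
      cases n with
      | zero => simp [canonF, numNodes]
      | succ m =>
          constructor
          · intro ht
            simp only [canonF, Finset.mem_biUnion, Finset.mem_univ, Finset.mem_attach,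
              Finset.mem_image, Finset.mem_product, Finset.mem_filter, true_and] at ht
            obtain ⟨a', i, ⟨⟨l', r'⟩, ⟨⟨hp1, hp2, hok⟩, heq⟩⟩⟩ := ht
            injection heq with h1 h2 h3
            subst h1; subst h2; subst h3
            have hl := (ihl i.1).mp hp1
            have hr := (ihr (m - i.1)).mp hp2
            have hi : i.1 < m + 1 := Finset.mem_range.mp i.2
            refine ⟨⟨hl.1, hr.1, ?_⟩, ?_⟩
            · cases r' with
              | leaf => trivial
              | node b l'' r'' => exact (rOK_iff a' b).mp hok
            · have h1 := hl.2
              have h2 := hr.2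
              simp only [numNodes]
              simp only at h1 h2
              omega
          · rintro ⟨⟨hcl, hcr, hpat⟩, hn⟩
            simp only [numNodes] at hn
            have hi : numNodes l < m + 1 := by omega
            simp only [canonF, Finset.mem_biUnion, Finset.mem_univ, Finset.mem_attach,
              Finset.mem_image, Finset.mem_product, Finset.mem_filter, true_and]
            refine ⟨a, ⟨numNodes l, Finset.mem_range.mpr hi⟩, (l, r), ⟨⟨?_, ?_, ?_⟩, rfl⟩⟩
            · exact (ihl _).mpr ⟨hcl, rfl⟩
            · refine (ihr _).mpr ⟨hcr, ?_⟩
              show numNodes r = m - numNodes l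
              omega
            · cases r with
              | leaf => rfl
              | node b _ _ => exact (rOK_iff a b).mpr hpat

lemma canonCount_eq (n : ℕ) : canonCount n = (canonF n).card := by
  have : {t : T4 | Canonical t ∧ numNodes t = n} = ↑(canonF n) := by
    ext t; simp [mem_canonF]
  rw [canonCount, this, Set.ncard_coe_finset]

lemma card_canonF_succ (n : ℕ) :
    (canonF (n + 1)).card
      = ∑ i ∈ Finset.range (n + 1), (canonF i).card *
          ∑ a : Lbl, ((canonF (n - i)).filter fun r => okRight a r).card := by
  have hform : ∀ (a : Lbl) (i : {x // x ∈ Finset.range (n+1)}) (t : T4),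
      t ∈ ((canonF i.1 ×ˢ ((canonF (n - i.1)).filter fun r => okRight a r)).image
            fun p => T4.node a p.1 p.2) →
      ∃ l r, t = T4.node a l r ∧ numNodes l = i.1 := by
    intro a i t ht
    simp only [Finset.mem_image, Finset.mem_product, Finset.mem_filter] at ht
    obtain ⟨⟨l, r⟩, ⟨⟨hl, _⟩, rfl⟩⟩ := ht
    exact ⟨l, r, rfl, ((mem_canonF l _).mp hl).2⟩
  have hinj : ∀ a : Lbl, Function.Injective (fun p : T4 × T4 => T4.node a p.1 p.2) := by
    intro a p q h
    cases p; cases q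
    injection h with h1 h2 h3
    simp_all
  rw [canonF, Finset.card_biUnion]
  · have inner : ∀ a : Lbl,
        ((Finset.range (n+1)).attach.biUnion fun i =>
          ((canonF i.1) ×ˢ ((canonF (n - i.1)).filter fun r => okRight a r)).image
            fun p => T4.node a p.1 p.2).card
        = ∑ i ∈ Finset.range (n+1),
            (canonF i).card * ((canonF (n-i)).filter fun r => okRight a r).card := by
      intro a
      rw [Finset.card_biUnion]
      · rw [← Finset.sum_attach (Finset.range (n+1))
          fun i => (canonF i).card * ((canonF (n-i)).filter fun r => okRight a r).card]
        refine Finset.sum_congr rfl fun i _ => ?_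
        rw [Finset.card_image_of_injective _ (hinj a), Finset.card_product]
      · intro i _ j _ hij
        rw [Function.onFun, Finset.disjoint_left]
        intro t hti htj
        obtain ⟨l, r, rfl, hl⟩ := hform a i t hti
        obtain ⟨l', r', heq, hl'⟩ := hform a j _ htj
        injection heq with h1 h2 h3
        exact hij (Subtype.ext (by rw [← hl, h2, hl']))
    simp only [inner]
    rw [Finset.sum_comm]
    exact Finset.sum_congr rfl fun i _ => (Finset.mul_sum _ _ _).symm
  · intro a _ a' _ haa'
    rw [Function.onFun, Finset.disjoint_left]
    intro t hti htj
    simp only [Finset.mem_biUnion, Finset.mem_attach, true_and] at hti htj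
    obtain ⟨i, hti⟩ := hti
    obtain ⟨j, htj⟩ := htj
    obtain ⟨l, r, rfl, _⟩ := hform a i t hti
    obtain ⟨l', r', heq, _⟩ := hform a' j _ htj
    injection heq with h1 _ _
    exact haa' h1

lemma canonF_zero : canonF 0 = {T4.leaf} := by rw [canonF]

lemma canonF_zero_card : (canonF 0).card = 1 := by rw [canonF_zero]; rfl

lemma sum_ok_leaf : (∑ a : Lbl, if okRight a T4.leaf then 1 else 0) = 4 := by
  simp [okRight]; rfl

lemma sum_rOK (b : Lbl) : (∑ a : Lbl, if rOK a b then 1 else 0) = 2 := by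
  cases b <;> rfl

lemma sum_filter_ok (m : ℕ) :
    ∑ a : Lbl, ((canonF m).filter fun r => okRight a r).card
      = if m = 0 then 4 else 2 * (canonF m).card := by
  have key : ∀ r ∈ canonF m,
      (∑ a : Lbl, if okRight a r then 1 else 0) = (if m = 0 then 4 else 2) := by
    intro r hr
    obtain ⟨hc, hn⟩ := (mem_canonF r m).mp hr
    cases r with
    | leaf =>
        simp only [numNodes] at hn
        subst hn
        simpa using sum_ok_leaf
    | node b l r' =>
        have : m ≠ 0 := by simp only [numNodes] at hn; omega
        simp only [this, if_false]
        exact sum_rOK b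
  calc ∑ a : Lbl, ((canonF m).filter fun r => okRight a r).card
      = ∑ a : Lbl, ∑ r ∈ canonF m, if okRight a r then 1 else 0 :=
        Finset.sum_congr rfl fun a _ => Finset.card_filter _ _
    _ = ∑ r ∈ canonF m, ∑ a : Lbl, if okRight a r then 1 else 0 := Finset.sum_comm
    _ = ∑ _r ∈ canonF m, (if m = 0 then 4 else 2) := Finset.sum_congr rfl key
    _ = (canonF m).card * (if m = 0 then 4 else 2) := by rw [Finset.sum_const, smul_eq_mul]
    _ = if m = 0 then 4 else 2 * (canonF m).card := by
        rcases eq_or_ne m 0 with h | h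
        · subst h; simp [canonF_zero_card]
        · simp [h, mul_comm]

lemma canonF_card_rec (n : ℕ) :
    (canonF (n + 1)).card = 2 * (canonF n).card
      + 2 * ∑ i ∈ Finset.range (n + 1), (canonF i).card * (canonF (n - i)).card := by
  rw [card_canonF_succ]
  rw [Finset.sum_range_succ, Finset.sum_range_succ
    (fun i => (canonF i).card * (canonF (n - i)).card)]
  have h1 : ∀ i ∈ Finset.range n,
      (canonF i).card * (∑ a : Lbl, ((canonF (n - i)).filter fun r => okRight a r).card)
        = 2 * ((canonF i).card * (canonF (n - i)).card) := by
    intro i hi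
    have : n - i ≠ 0 := by have := Finset.mem_range.mp hi; omega
    rw [sum_filter_ok, if_neg this]; ring
  rw [Finset.sum_congr rfl h1, Nat.sub_self, sum_filter_ok, if_pos rfl,
    canonF_zero_card, ← Finset.mul_sum]
  ring

lemma canonCount_rec (n : ℕ) :
    canonCount (n + 1) = 2 * canonCount n
      + 2 * ∑ i ∈ Finset.range (n + 1), canonCount i * canonCount (n - i) := by
  simp only [canonCount_eq]
  exact canonF_card_rec n

lemma canonCount_zero : canonCount 0 = 1 := by
  rw [canonCount_eq, canonF_zero_card]

lemma canonCount_one : canonCount 1 = 4 := by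
  have := canonCount_rec 0
  simp [canonCount_zero, Finset.sum_range_succ] at this
  omega

lemma canonCount_two : canonCount 2 = 24 := by
  have := canonCount_rec 1
  simp [canonCount_zero, canonCount_one, Finset.sum_range_succ] at this
  omega

lemma canonCount_three : canonCount 3 = 176 := by
  have := canonCount_rec 2
  simp [canonCount_zero, canonCount_one, canonCount_two, Finset.sum_range_succ] at this
  omega


/-- The number `c_n` of canonical trees with `n` internal nodes
satisfies `c₀ = 1`, `c_n = 2 c_{n-1} + 2 ∑_{i=0}^{n-1} c_i c_{n-1-i}`; equivalently its
ordinary generating series `F` satisfies `2xF² + (2x - 1)F + 1 = 0`.  In particular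
`c₁ = 4`, `c₂ = 24`, `c₃ = 176`. -/
theorem canonical_generating_series :
    canonCount 0 = 1 ∧ canonCount 1 = 4 ∧ canonCount 2 = 24 ∧ canonCount 3 = 176 ∧
    (∀ n : ℕ, 1 ≤ n →
      canonCount n = 2 * canonCount (n - 1)
        + 2 * ∑ i ∈ Finset.range n, canonCount i * canonCount (n - 1 - i)) ∧
    (2 * PowerSeries.X * (PowerSeries.mk fun n => (canonCount n : ℚ)) ^ 2
      + (2 * PowerSeries.X - 1) * (PowerSeries.mk fun n => (canonCount n : ℚ))
      + 1 = 0) := by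
  have hrec : ∀ n : ℕ, 1 ≤ n →
      canonCount n = 2 * canonCount (n - 1)
        + 2 * ∑ i ∈ Finset.range n, canonCount i * canonCount (n - 1 - i) := by
    intro n hn
    cases n with
    | zero => omega
    | succ m => simpa using canonCount_rec m
  refine ⟨canonCount_zero, canonCount_one, canonCount_two, canonCount_three, hrec, ?_⟩
  set F : PowerSeries ℚ := PowerSeries.mk fun n => (canonCount n : ℚ) with hF
  have hexp : 2 * PowerSeries.X * F ^ 2 + (2 * PowerSeries.X - 1) * F + 1
      = PowerSeries.X * (F * F) + PowerSeries.X * (F * F)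
        + (PowerSeries.X * F + PowerSeries.X * F) + 1 - F := by ring
  rw [hexp]
  ext n
  rw [map_zero]
  cases n with
  | zero =>
      simp only [map_sub, map_add, PowerSeries.coeff_zero_X_mul, PowerSeries.coeff_one,
        hF, PowerSeries.coeff_mk, canonCount_zero]
      norm_num
  | succ k =>
      simp only [map_sub, map_add, PowerSeries.coeff_succ_X_mul, PowerSeries.coeff_one,
        Nat.succ_ne_zero, if_false]
      simp only [hF, PowerSeries.coeff_mk, PowerSeries.coeff_mul]
      rw [Finset.Nat.sum_antidiagonal_eq_sum_range_succ_mk]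
      simp only [PowerSeries.coeff_mk]
      have := canonCount_rec k
      have hcast : (canonCount (k+1) : ℚ)
          = 2 * (canonCount k : ℚ)
            + 2 * ∑ i ∈ Finset.range (k+1), (canonCount i : ℚ) * (canonCount (k - i) : ℚ) := by
        rw [this]; push_cast; ring
      rw [hcast]; ring
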